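/- Let G be a profinite group and K a (closed) subgroup such that the conjugacy class x^G is finite for each x ∈ K. Then there exists an integer n such that |x^G| ≤ n for all x ∈ K. -/

import Mathlib

open Set Pointwise

section Aux

variable {G : Type*} [Group G]

lemma conj_mem_conjugatesOf (g a : G) : g * a * g⁻¹ ∈ conjugatesOf a :=
  isConj_iff.mpr ⟨g, rfl⟩

lemma conjugatesOf_mul_subset (a b : G) :
    conjugatesOf (a * b) ⊆ conjugatesOf a * conjugatesOf b := by
  intro c hc
  obtain ⟨g, hg⟩ := isConj_iff.mp hc
  exact ⟨g * a * g⁻¹, conj_mem_conjugatesOf g a, g * b * g⁻¹, conj_mem_conjugatesOf g b,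
    by rw [← hg]; group⟩

lemma card_conj_mul_le (a b : G) (ha : (conjugatesOf a).Finite) (hb : (conjugatesOf b).Finite) :
    Nat.card (conjugatesOf (a * b)) ≤ Nat.card (conjugatesOf a) * Nat.card (conjugatesOf b) :=
  le_trans (Nat.card_mono (ha.mul hb) (conjugatesOf_mul_subset a b)) Set.natCard_mul_le

lemma mem_bdd_of_card_le {x : G} {i : ℕ} (hx : (conjugatesOf x).Finite)
    (h : Nat.card (conjugatesOf x) ≤ i) :
    ∀ f : Fin (i + 1) → G, ¬ Function.Injective fun j => f j * x * (f j)⁻¹ := by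
  intro f hf
  haveI := hx.to_subtype
  have hinj : Function.Injective
      (fun j : Fin (i + 1) => (⟨f j * x * (f j)⁻¹, conj_mem_conjugatesOf _ _⟩ : conjugatesOf x)) :=
    fun j k hjk => hf (congrArg Subtype.val hjk)
  have h2 : Nat.card (Fin (i + 1)) ≤ Nat.card (conjugatesOf x) :=
    Nat.card_le_card_of_injective _ hinj
  simp only [Nat.card_eq_fintype_card, Fintype.card_fin] at h2
  omega

lemma card_le_of_mem_bdd {x : G} {i : ℕ} (hx : (conjugatesOf x).Finite)
    (h : ∀ f : Fin (i + 1) → G, ¬ Function.Injective fun j => f j * x * (f j)⁻¹) :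
    Nat.card (conjugatesOf x) ≤ i := by
  by_contra hlt
  push_neg at hlt
  haveI := hx.fintype
  have hc : Fintype.card (Fin (i + 1)) ≤ Fintype.card (conjugatesOf x) := by
    rw [Fintype.card_fin, ← Nat.card_eq_fintype_card]; omega
  obtain ⟨e⟩ := Function.Embedding.nonempty_of_card_le hc
  choose g hg using fun j : Fin (i + 1) => isConj_iff.mp (e j).2
  refine h g (fun j k hjk => e.injective (Subtype.ext ?_))
  simp only at hjk
  rw [← hg j, ← hg k]
  exact hjk

lemma isClosed_bdd [TopologicalSpace G] [IsTopologicalGroup G] [T2Space G] (i : ℕ) :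
    IsClosed {x : G | ∀ f : Fin (i + 1) → G, ¬ Function.Injective fun j => f j * x * (f j)⁻¹} := by
  rw [← isOpen_compl_iff]
  have hset : {x : G | ∀ f : Fin (i + 1) → G,
      ¬ Function.Injective fun j => f j * x * (f j)⁻¹}ᶜ =
      ⋃ f : Fin (i + 1) → G, ⋂ j, ⋂ k, ⋂ (_ : j ≠ k),
        {x : G | f j * x * (f j)⁻¹ ≠ f k * x * (f k)⁻¹} := by
    ext x
    simp only [mem_compl_iff, mem_setOf_eq, not_forall, not_not, mem_iUnion, mem_iInter]
    constructor
    · rintro ⟨f, hf⟩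
      exact ⟨f, fun j k hjk heq => hjk (hf heq)⟩
    · rintro ⟨f, hf⟩
      refine ⟨f, fun j k heq => ?_⟩
      by_contra hjk
      exact hf j k hjk heq
  rw [hset]
  refine isOpen_iUnion fun f => isOpen_iInter_of_finite fun j =>
    isOpen_iInter_of_finite fun k => isOpen_iInter_of_finite fun _ =>
      isOpen_ne_fun ?_ ?_ <;> fun_prop

end Aux

/-- In a profinite group, if every element of a closed subgroup `K` has finite
conjugacy class, then the sizes of these classes are uniformly bounded. -/
theorem stmt_14 (G : Type*) [Group G] [TopologicalSpace G] [IsTopologicalGroup G]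
    [CompactSpace G] [T2Space G] [TotallyDisconnectedSpace G]
    (K : Subgroup G) (hK : IsClosed (K : Set G))
    (hfin : ∀ x ∈ K, (conjugatesOf x).Finite) :
    ∃ n : ℕ, ∀ x ∈ K, Nat.card (conjugatesOf x) ≤ n := by
  haveI : CompactSpace K := isCompact_iff_compactSpace.mp hK.isCompact
  set T : ℕ → Set G := fun i =>
    {x : G | ∀ f : Fin (i + 1) → G, ¬ Function.Injective fun j => f j * x * (f j)⁻¹} with hT
  have hcover : (⋃ i, (Subtype.val ⁻¹' T i : Set K)) = univ := by
    ext x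
    simp only [mem_iUnion, mem_univ, iff_true, mem_preimage]
    exact ⟨Nat.card (conjugatesOf (x : G)), mem_bdd_of_card_le (hfin x x.2) le_rfl⟩
  obtain ⟨n, y, hy⟩ := nonempty_interior_of_iUnion_of_closed
    (fun i => (isClosed_bdd i).preimage continuous_subtype_val) hcover
  obtain ⟨U, hUopen, hUeq⟩ := isOpen_induced_iff.mp
    (isOpen_interior (s := (Subtype.val ⁻¹' T n : Set K)))
  have hyU : (y : G) ∈ U := by
    have : y ∈ Subtype.val ⁻¹' U := by rw [hUeq]; exact hy
    exact this
  have hUsub : ∀ z ∈ U, z ∈ K → Nat.card (conjugatesOf z) ≤ n := by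
    intro z hz hzK
    have hmem : (⟨z, hzK⟩ : K) ∈ interior (Subtype.val ⁻¹' T n : Set K) := by
      rw [← hUeq]; exact hz
    exact card_le_of_mem_bdd (hfin z hzK) (interior_subset hmem)
  set x0 : G := (y : G) with hx0
  have hcov : (K : Set G) ⊆ ⋃ k : K, ((k : G) * x0⁻¹) • U := by
    intro x hx
    refine mem_iUnion.mpr ⟨⟨x, hx⟩, ?_⟩
    rw [Set.mem_smul_set]
    exact ⟨x0, hyU, by simp [smul_eq_mul, mul_assoc]⟩
  obtain ⟨t, ht⟩ := hK.isCompact.elim_finite_subcover _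
    (fun k : K => hUopen.smul ((k : G) * x0⁻¹)) hcov
  refine ⟨(t.sup fun k => Nat.card (conjugatesOf ((k : G) * x0⁻¹))) * n, fun x hx => ?_⟩
  have := ht hx
  simp only [mem_iUnion] at this
  obtain ⟨k, hkt, hxk⟩ := this
  rw [Set.mem_smul_set] at hxk
  obtain ⟨u, hu, hux⟩ := hxk
  have hux' : ((k : G) * x0⁻¹) * u = x := hux
  have huK : u ∈ K := by
    have hueq : u = (x0 * (k : G)⁻¹) * x := by rw [← hux']; group
    rw [hueq]
    exact K.mul_mem (K.mul_mem y.2 (K.inv_mem k.2)) hx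
  have h1 : Nat.card (conjugatesOf u) ≤ n := hUsub u hu huK
  have h2 := card_conj_mul_le ((k : G) * x0⁻¹) u
    (hfin _ (K.mul_mem k.2 (K.inv_mem y.2))) (hfin u huK)
  rw [hux'] at h2
  exact le_trans h2 (Nat.mul_le_mul (Finset.le_sup (f := fun k : K => Nat.card (conjugatesOf ((k : G) * x0⁻¹))) hkt) h1)
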